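/- Naive lower bound for power connectives with α > 1: Fix a real number α > 1 and a positive integer m. There exist a finite-dimensional real inner product space H and vectors x_1,…,x_{2^m}, y_1,…,y_{2^m} in the closed unit ball of H such that for all 1 ≤ i < j ≤ 2^m, (max(⟪x_i,y_j⟫,0))^α − (max(⟪x_j,y_i⟫,0))^α ≥ m^(−α). In particular, f_α(x,y) = (max(⟪x,y⟫,0))^α on the unit ball is not (2^m, m^(−α))-stable. -/

import Mathlib

open RealInnerProductSpace

/-- If bit `k` of `i` is `0`, bit `k` of `j` is `1`, and the higher bits agree, then `i < j`. -/
lemma bit_lt_aux {i j k : ℕ} (h1 : i.testBit k = false) (h2 : j.testBit k = true)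
    (h3 : i / 2 ^ (k + 1) = j / 2 ^ (k + 1)) : i < j := by
  have hi0 : i / 2 ^ k % 2 = 0 := by
    have := Nat.testBit_eq_decide_div_mod_eq (x := i) (i := k)
    rw [h1] at this
    simpa using this.symm
  have hj1 : j / 2 ^ k % 2 = 1 := by
    have := Nat.testBit_eq_decide_div_mod_eq (x := j) (i := k)
    rw [h2] at this
    simpa using this.symm
  have hmi : i % 2 ^ (k + 1) = i % 2 ^ k := by
    rw [pow_succ, Nat.mod_mul, hi0]; simp
  have hmj : j % 2 ^ (k + 1) = j % 2 ^ k + 2 ^ k := by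
    rw [pow_succ, Nat.mod_mul, hj1]; ring
  have hr : i % 2 ^ (k + 1) < j % 2 ^ (k + 1) := by
    rw [hmi, hmj]
    calc i % 2 ^ k < 2 ^ k := Nat.mod_lt _ (by positivity)
    _ ≤ j % 2 ^ k + 2 ^ k := Nat.le_add_left _ _
  calc i = 2 ^ (k + 1) * (i / 2 ^ (k + 1)) + i % 2 ^ (k + 1) := (Nat.div_add_mod _ _).symm
    _ < 2 ^ (k + 1) * (j / 2 ^ (k + 1)) + j % 2 ^ (k + 1) := by rw [h3]; omega
    _ = j := Nat.div_add_mod _ _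

/-- If `i < j` then there is a bit where `i` has `0`, `j` has `1`, and the higher bits agree. -/
lemma bit_exists : ∀ j i : ℕ, i < j →
    ∃ k, i.testBit k = false ∧ j.testBit k = true ∧ i / 2 ^ (k + 1) = j / 2 ^ (k + 1) := by
  intro j
  induction j using Nat.strong_induction_on with
  | _ j ih =>
    intro i hij
    by_cases h : i / 2 = j / 2
    · have hi0 : i % 2 = 0 ∧ j % 2 = 1 := by omega
      refine ⟨0, ?_, ?_, ?_⟩
      · simp [Nat.testBit_zero, hi0.1]
      · simp [Nat.testBit_zero, hi0.2]
      · simpa using h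
    · have h2 : i / 2 < j / 2 := lt_of_le_of_ne (Nat.div_le_div_right hij.le) h
      have hj2 : j / 2 < j := Nat.div_lt_self (by omega) (by norm_num)
      obtain ⟨k, hk1, hk2, hk3⟩ := ih (j / 2) hj2 (i / 2) h2
      refine ⟨k + 1, ?_, ?_, ?_⟩
      · rw [Nat.testBit_add_one]; exact hk1
      · rw [Nat.testBit_add_one]; exact hk2
      · have e1 : i / 2 ^ (k + 1 + 1) = i / 2 / 2 ^ (k + 1) := by
          rw [Nat.div_div_eq_div_mul, ← pow_succ']
        have e2 : j / 2 ^ (k + 1 + 1) = j / 2 / 2 ^ (k + 1) := by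
          rw [Nat.div_div_eq_div_mul, ← pow_succ']
        rw [e1, e2, hk3]

/-- Naive lower bound for power connectives `(⟪x,y⟫₊)^α` with `α > 1`. -/
theorem power_naive_lower_bound (α : ℝ) (hα : 1 < α) (m : ℕ) (hm : 0 < m) :
    ∃ (N : ℕ) (x y : Fin (2 ^ m) → EuclideanSpace ℝ (Fin N)),
      (∀ i, ‖x i‖ ≤ 1) ∧ (∀ i, ‖y i‖ ≤ 1) ∧
      ∀ i j : Fin (2 ^ m), i < j →
        (m : ℝ) ^ (-α) ≤ (max ⟪x i, y j⟫ 0) ^ α - (max ⟪x j, y i⟫ 0) ^ α := by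
  classical
  have hm' : (0 : ℝ) < m := by exact_mod_cast hm
  set s : ℝ := (Real.sqrt m)⁻¹ with hs
  have hs0 : 0 ≤ s := by positivity
  have hss : s * s = (m : ℝ)⁻¹ := by
    rw [hs, ← mul_inv, Real.mul_self_sqrt hm'.le]
  let e : Fin m × Fin (2 ^ m) ≃ Fin (m * 2 ^ m) := finProdFinEquiv
  let X : ℕ → Fin m × Fin (2 ^ m) → ℝ := fun i q =>
    if (Nat.testBit i q.1 = false) ∧ i / 2 ^ ((q.1 : ℕ) + 1) = (q.2 : ℕ) then s else 0
  let Y : ℕ → Fin m × Fin (2 ^ m) → ℝ := fun j q =>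
    if (Nat.testBit j q.1 = true) ∧ j / 2 ^ ((q.1 : ℕ) + 1) = (q.2 : ℕ) then s else 0
  -- nonnegativity
  have hXnn : ∀ i q, 0 ≤ X i q := by
    intro i q; dsimp only [X]; split <;> simp [hs0]
  have hYnn : ∀ j q, 0 ≤ Y j q := by
    intro j q; dsimp only [Y]; split <;> simp [hs0]
  let xv : Fin (2 ^ m) → EuclideanSpace ℝ (Fin (m * 2 ^ m)) := fun i => WithLp.toLp 2 (fun t => X (i : ℕ) (e.symm t))
  let yv : Fin (2 ^ m) → EuclideanSpace ℝ (Fin (m * 2 ^ m)) := fun j => WithLp.toLp 2 (fun t => Y (j : ℕ) (e.symm t))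
  refine ⟨m * 2 ^ m, xv, yv, ?_, ?_, ?_⟩
  · -- norm of x
    intro i
    rw [EuclideanSpace.norm_eq, Real.sqrt_le_one]
    have := Equiv.sum_comp e.symm (fun q => ‖X i q‖ ^ 2)
    show (∑ t, ‖X (i : ℕ) (e.symm t)‖ ^ 2) ≤ 1
    calc (∑ t, ‖X (i : ℕ) (e.symm t)‖ ^ 2) = ∑ q : Fin m × Fin (2 ^ m), ‖X i q‖ ^ 2 := this
      _ = ∑ k : Fin m, ∑ p : Fin (2 ^ m), ‖X i (k, p)‖ ^ 2 := Fintype.sum_prod_type _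
      _ ≤ ∑ _k : Fin m, (m : ℝ)⁻¹ := by
          refine Finset.sum_le_sum fun k _ => ?_
          have hv : (i : ℕ) / 2 ^ ((k : ℕ) + 1) < 2 ^ m :=
            lt_of_le_of_lt (Nat.div_le_self _ _) i.isLt
          calc (∑ p : Fin (2 ^ m), ‖X i (k, p)‖ ^ 2)
              ≤ ∑ p : Fin (2 ^ m),
                (if (⟨(i : ℕ) / 2 ^ ((k : ℕ) + 1), hv⟩ : Fin (2 ^ m)) = p then (m : ℝ)⁻¹ else 0) := by
                refine Finset.sum_le_sum fun p _ => ?_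
                dsimp only [X]
                split
                · rename_i hcond
                  have : (⟨(i : ℕ) / 2 ^ ((k : ℕ) + 1), hv⟩ : Fin (2 ^ m)) = p :=
                    Fin.ext hcond.2
                  rw [if_pos this, ← hss]
                  simp [abs_of_nonneg hs0, sq]
                · have h0 : (0:ℝ) ≤ (m : ℝ)⁻¹ := by positivity
                  split <;> simp [h0]
            _ = (m : ℝ)⁻¹ := by rw [Finset.sum_ite_eq]; simp
      _ = 1 := by
          rw [Finset.sum_const, Finset.card_univ, Fintype.card_fin, nsmul_eq_mul]
          field_simp
  · -- norm of y
    intro j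
    rw [EuclideanSpace.norm_eq, Real.sqrt_le_one]
    have := Equiv.sum_comp e.symm (fun q => ‖Y j q‖ ^ 2)
    show (∑ t, ‖Y (j : ℕ) (e.symm t)‖ ^ 2) ≤ 1
    calc (∑ t, ‖Y (j : ℕ) (e.symm t)‖ ^ 2) = ∑ q : Fin m × Fin (2 ^ m), ‖Y j q‖ ^ 2 := this
      _ = ∑ k : Fin m, ∑ p : Fin (2 ^ m), ‖Y j (k, p)‖ ^ 2 := Fintype.sum_prod_type _
      _ ≤ ∑ _k : Fin m, (m : ℝ)⁻¹ := by
          refine Finset.sum_le_sum fun k _ => ?_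
          have hv : (j : ℕ) / 2 ^ ((k : ℕ) + 1) < 2 ^ m :=
            lt_of_le_of_lt (Nat.div_le_self _ _) j.isLt
          calc (∑ p : Fin (2 ^ m), ‖Y j (k, p)‖ ^ 2)
              ≤ ∑ p : Fin (2 ^ m),
                (if (⟨(j : ℕ) / 2 ^ ((k : ℕ) + 1), hv⟩ : Fin (2 ^ m)) = p then (m : ℝ)⁻¹ else 0) := by
                refine Finset.sum_le_sum fun p _ => ?_
                dsimp only [Y]
                split
                · rename_i hcond
                  have : (⟨(j : ℕ) / 2 ^ ((k : ℕ) + 1), hv⟩ : Fin (2 ^ m)) = p :=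
                    Fin.ext hcond.2
                  rw [if_pos this, ← hss]
                  simp [abs_of_nonneg hs0, sq]
                · have h0 : (0:ℝ) ≤ (m : ℝ)⁻¹ := by positivity
                  split <;> simp [h0]
            _ = (m : ℝ)⁻¹ := by rw [Finset.sum_ite_eq]; simp
      _ = 1 := by
          rw [Finset.sum_const, Finset.card_univ, Fintype.card_fin, nsmul_eq_mul]
          field_simp
  · -- the main inequality
    intro i j hij
    have hijn : (i : ℕ) < (j : ℕ) := hij
    -- inner products as sums
    have hinner : ∀ a b : Fin (2 ^ m),
        (⟪xv a, yv b⟫ : ℝ) = ∑ q : Fin m × Fin (2 ^ m), X (a : ℕ) q * Y (b : ℕ) q := by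
      intro a b
      rw [PiLp.inner_apply]
      simp only [RCLike.inner_apply, conj_trivial]
      exact (Finset.sum_congr rfl fun t _ => mul_comm _ _).trans
        (Equiv.sum_comp e.symm (fun q => X (a : ℕ) q * Y (b : ℕ) q))
    -- the bad inner product vanishes
    have hzero : (∑ q : Fin m × Fin (2 ^ m), X (j : ℕ) q * Y (i : ℕ) q) = 0 := by
      refine Finset.sum_eq_zero fun q _ => ?_
      dsimp only [X, Y]
      split
      · rename_i h1
        split
        · rename_i h2
          exfalso
          have := bit_lt_aux h1.1 h2.1 (h1.2.trans h2.2.symm)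
          omega
        · simp
      · simp
    -- the good inner product is at least 1/m
    obtain ⟨k, hk1, hk2, hk3⟩ := bit_exists (j : ℕ) (i : ℕ) hijn
    have hkm : k < m := by
      have h2k : 2 ^ k ≤ (j : ℕ) := Nat.ge_two_pow_of_testBit hk2
      have := lt_of_le_of_lt h2k j.isLt
      exact (Nat.pow_lt_pow_iff_right (by norm_num)).mp this
    have hv : (i : ℕ) / 2 ^ (k + 1) < 2 ^ m :=
      lt_of_le_of_lt (Nat.div_le_self _ _) i.isLt
    have hpos : (m : ℝ)⁻¹ ≤ ∑ q : Fin m × Fin (2 ^ m), X (i : ℕ) q * Y (j : ℕ) q := by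
      have hmem : ((⟨k, hkm⟩ : Fin m), (⟨(i : ℕ) / 2 ^ (k + 1), hv⟩ : Fin (2 ^ m)))
          ∈ (Finset.univ : Finset (Fin m × Fin (2 ^ m))) := Finset.mem_univ _
      have hterm : X (i : ℕ) (⟨k, hkm⟩, ⟨(i : ℕ) / 2 ^ (k + 1), hv⟩)
          * Y (j : ℕ) (⟨k, hkm⟩, ⟨(i : ℕ) / 2 ^ (k + 1), hv⟩) = (m : ℝ)⁻¹ := by
        dsimp only [X, Y]
        rw [if_pos ⟨hk1, rfl⟩, if_pos ⟨hk2, by simpa using hk3.symm⟩]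
        exact hss
      calc (m : ℝ)⁻¹ = _ := hterm.symm
        _ ≤ _ := Finset.single_le_sum (f := fun q => X (i : ℕ) q * Y (j : ℕ) q)
            (fun q _ => mul_nonneg (hXnn _ _) (hYnn _ _)) hmem
    rw [hinner, hinner, hzero]
    have hnn : (0 : ℝ) ≤ ∑ q : Fin m × Fin (2 ^ m), X (i : ℕ) q * Y (j : ℕ) q :=
      le_trans (by positivity) hpos
    rw [max_eq_left hnn, max_self, Real.zero_rpow (by linarith : α ≠ 0), sub_zero]
    have heq : (m : ℝ) ^ (-α) = ((m : ℝ)⁻¹) ^ α := by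
      rw [Real.rpow_neg hm'.le, ← Real.inv_rpow hm'.le]
    rw [heq]
    exact Real.rpow_le_rpow (by positivity) hpos (by linarith)
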